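/- Let u and v be unit vectors in a real inner product space and let Pr_v denote the orthogonal projection onto the span of v. Then there exists a ∈ {-1, 1} such that ‖a·v - u‖ ≤ 2·‖u - Pr_v u‖. -/

import Mathlib

/-- Projection-to-alignment inequality (Proposition 18 of von Luxburg–Bousquet–Belkin):
for unit vectors `u, v` in a real inner product space, there is a sign `a ∈ {-1, 1}`
with `‖a·v - u‖ ≤ 2·‖u - Pr_v u‖`, where `Pr_v u = ⟨u, v⟩·v`. -/
theorem stmt17 {E : Type*} [NormedAddCommGroup E] [InnerProductSpace ℝ E]
    (u v : E) (hu : ‖u‖ = 1) (hv : ‖v‖ = 1) :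
    ∃ a : ℝ, (a = 1 ∨ a = -1) ∧
      ‖a • v - u‖ ≤ 2 * ‖u - (inner ℝ u v : ℝ) • v‖ := by
  set t : ℝ := inner ℝ u v with ht
  have habs : |t| ≤ 1 := by
    have := abs_real_inner_le_norm u v
    simpa [hu, hv] using this
  set a : ℝ := if 0 ≤ t then 1 else -1 with ha
  have hat : a * t = |t| := by
    by_cases h : 0 ≤ t
    · simp [ha, h, abs_of_nonneg h]
    · simp [ha, h, abs_of_neg (lt_of_not_ge h)]
  refine ⟨a, by by_cases h : 0 ≤ t <;> simp [ha, h], ?_⟩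
  have h1 : ‖a • v - u‖ ^ 2 = 2 - 2 * |t| := by
    rw [norm_sub_sq_real]
    have : (inner ℝ (a • v) u : ℝ) = a * t := by
      rw [real_inner_smul_left, real_inner_comm]
    rw [this, hat]
    have : ‖a • v‖ = 1 := by
      by_cases h : 0 ≤ t <;> simp [ha, h, norm_smul, hv]
    rw [this, hu]; ring
  have h2 : ‖u - t • v‖ ^ 2 = 1 - t ^ 2 := by
    rw [norm_sub_sq_real, real_inner_smul_right, ← ht, norm_smul, hu, hv]
    simp [sq_abs]; ring
  have hsq : ‖a • v - u‖ ^ 2 ≤ (2 * ‖u - t • v‖) ^ 2 := by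
    rw [mul_pow, h1, h2]
    nlinarith [sq_abs t, abs_nonneg t]
  exact le_of_pow_le_pow_left₀ two_ne_zero (by positivity) hsq
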